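/- Let Λ₁, …, Λ_m be Delone sets in ℝ^d whose union is also Delone, let Q : ℝ^d → ℝ^d be an expanding linear map (every complex eigenvalue of Q has modulus > 1), and let D_{ij} ⊆ ℝ^d (i,j = 1,…,m) be finite sets such that for each i, Λ_i = ⋃_{j=1}^m (QΛ_j + D_{ij}), where the sets {QΛ_j + a : 1 ≤ j ≤ m, a ∈ D_{ij}} appearing in this union are pairwise disjoint. Let S be the m × m matrix with S_{ij} = #D_{ij}, assume S is primitive (some power of S has all entries strictly positive), and let λ > 0 be an eigenvalue of S admitting an eigenvector with all entries strictly positive (the Perron–Frobenius eigenvalue). Then λ = |det Q|. -/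

import Mathlib

open scoped Pointwise

noncomputable section


open scoped Pointwise

noncomputable section

/-- `X` is uniformly discrete with parameter `r`: distinct points are at distance `≥ 2r`. -/
def UnifDiscrete {d : ℕ} (X : Set (EuclideanSpace ℝ (Fin d))) (r : ℝ) : Prop :=
  ∀ x ∈ X, ∀ y ∈ X, x ≠ y → 2 * r ≤ dist x y

/-- `X` is relatively dense with parameter `R`: every closed ball of radius `R` meets `X`. -/
def RelDense {d : ℕ} (X : Set (EuclideanSpace ℝ (Fin d))) (R : ℝ) : Prop :=
  ∀ z : EuclideanSpace ℝ (Fin d), ∃ x ∈ X, dist z x ≤ R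

/-- `X` is a Delone set. -/
def IsDelone {d : ℕ} (X : Set (EuclideanSpace ℝ (Fin d))) : Prop :=
  (∃ r > 0, UnifDiscrete X r) ∧ (∃ R > 0, RelDense X R)

namespace PfAux
open Metric MeasureTheory Set
open scoped ENNReal NNReal
variable {d : ℕ}
local notation "E" => EuclideanSpace ℝ (Fin d)


lemma vol_cb (z : E) {s : ℝ} (hs : 0 ≤ s) :
    volume (closedBall z s) = ENNReal.ofReal (s ^ d) * volume (ball (0:E) 1) := by
  rw [MeasureTheory.Measure.addHaar_closedBall volume z hs, finrank_euclideanSpace_fin]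

lemma vol_b1_pos : 0 < volume (ball (0:E) 1) := measure_ball_pos volume _ one_pos

lemma vol_b1_ne_top : volume (ball (0:E) 1) ≠ ⊤ := measure_ball_lt_top.ne

lemma count_pack {X : Set E} {r : ℝ} (hr : 0 < r) (hX : UnifDiscrete X r)
    {A A' : Set E} (hA' : volume A' ≠ ⊤)
    (h : ∀ x ∈ X ∩ A, closedBall x (r/2) ⊆ A') :
    (X ∩ A).Finite ∧
      ((X ∩ A).ncard : ℝ≥0∞) * volume (closedBall (0:E) (r/2)) ≤ volume A' := by
  have key : ∀ F : Finset E, ↑F ⊆ X ∩ A →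
      (F.card : ℝ≥0∞) * volume (closedBall (0:E) (r/2)) ≤ volume A' := by
    intro F hF
    have hdisj : Set.PairwiseDisjoint (↑F : Set E) (fun x => closedBall x (r/2)) := by
      intro x hx y hy hxy
      have h2r : 2 * r ≤ dist x y := hX x (hF hx).1 y (hF hy).1 hxy
      exact closedBall_disjoint_closedBall (by linarith)
    have hmeas : ∀ x ∈ F, MeasurableSet (closedBall x (r/2)) :=
      fun x _ => measurableSet_closedBall
    have hUnion : (⋃ x ∈ F, closedBall x (r/2)) ⊆ A' := by
      intro w hw
      simp only [Set.mem_iUnion] at hw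
      obtain ⟨x, hx, hw⟩ := hw
      exact h x (hF hx) hw
    calc (F.card : ℝ≥0∞) * volume (closedBall (0:E) (r/2))
        = ∑ x ∈ F, volume (closedBall x (r/2)) := by
          rw [Finset.sum_congr rfl (fun x _ => Measure.addHaar_closedBall_center volume x (r/2))]
          simp [mul_comm]
      _ = volume (⋃ x ∈ F, closedBall x (r/2)) :=
          (measure_biUnion_finset hdisj hmeas).symm
      _ ≤ volume A' := measure_mono hUnion
  have hvpos : 0 < volume (closedBall (0:E) (r/2)) :=
    lt_of_lt_of_le (measure_ball_pos volume _ (by linarith)) (measure_mono ball_subset_closedBall)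
  have hvtop : volume (closedBall (0:E) (r/2)) ≠ ⊤ := measure_closedBall_lt_top.ne
  have hfin : (X ∩ A).Finite := by
    by_contra hinf
    have hinf : (X ∩ A).Infinite := hinf
    obtain ⟨n, hn⟩ := ENNReal.exists_nat_gt
      (show volume A' / volume (closedBall (0:E) (r/2)) ≠ ⊤ from
        (ENNReal.div_lt_top hA' hvpos.ne').ne)
    obtain ⟨t, ht, htfin, hcard⟩ := hinf.exists_subset_ncard_eq n
    have := key htfin.toFinset (by rwa [Set.Finite.coe_toFinset])
    rw [Set.ncard_eq_toFinset_card t htfin] at hcard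
    rw [hcard] at this
    have : volume A' / volume (closedBall (0:E) (r/2)) < n := hn
    rw [ENNReal.div_lt_iff (Or.inl hvpos.ne') (Or.inl hvtop)] at this
    rw [mul_comm] at this
    exact absurd ‹(n : ℝ≥0∞) * _ ≤ _› (by rw [mul_comm]; exact not_le.mpr this)
  refine ⟨hfin, ?_⟩
  have := key hfin.toFinset (by rw [Set.Finite.coe_toFinset])
  rwa [← Set.ncard_eq_toFinset_card (X ∩ A) hfin] at this

lemma count_cover {X : Set E} {R : ℝ} (hX : RelDense X R)
    {A A' : Set E} (hfin : (X ∩ A').Finite)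
    (h : ∀ z ∈ A, ∀ x, dist z x ≤ R → x ∈ A') :
    volume A ≤ ((X ∩ A').ncard : ℝ≥0∞) * volume (closedBall (0:E) R) := by
  have hsub : A ⊆ ⋃ x ∈ hfin.toFinset, closedBall x R := by
    intro z hz
    obtain ⟨x, hxX, hdist⟩ := hX z
    have hxA' : x ∈ X ∩ A' := ⟨hxX, h z hz x hdist⟩
    simp only [Set.mem_iUnion]
    exact ⟨x, by simpa using hxA', by simpa [dist_comm] using hdist⟩
  calc volume A ≤ volume (⋃ x ∈ hfin.toFinset, closedBall x R) := measure_mono hsub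
    _ ≤ ∑ x ∈ hfin.toFinset, volume (closedBall x R) := measure_biUnion_finset_le _ _
    _ = ((X ∩ A').ncard : ℝ≥0∞) * volume (closedBall (0:E) R) := by
        rw [Finset.sum_congr rfl (fun x _ => Measure.addHaar_closedBall_center volume x R)]
        simp [Set.ncard_eq_toFinset_card (X ∩ A') hfin, mul_comm]


lemma pow_succ_apply (Q : E →ₗ[ℝ] E) (n : ℕ) (x : E) :
    (Q ^ (n+1)) x = Q ((Q ^ n) x) := by
  rw [pow_succ']; rfl

lemma decomp {m : ℕ}
    (Λ : Fin m → Set E) (hne : ∀ i, (Λ i).Nonempty)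
    (Q : E →ₗ[ℝ] E) (hQinj : Function.Injective Q)
    (D : Fin m → Fin m → Finset E)
    (heq : ∀ i, Λ i = ⋃ j, ⋃ a ∈ D i j, (fun x => Q x + a) '' Λ j)
    (hdisj : ∀ i, ∀ j j' : Fin m, ∀ a ∈ D i j, ∀ a' ∈ D i j', (j, a) ≠ (j', a') →
      Disjoint ((fun x => Q x + a) '' Λ j) ((fun x => Q x + a') '' Λ j'))
    (S : Matrix (Fin m) (Fin m) ℝ) (hS : ∀ i j, S i j = (D i j).card)
    (n : ℕ) :
    ∃ T : Fin m → Fin m → Finset E,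
      (∀ i k, ((T i k).card : ℝ) = (S ^ n) i k) ∧
      (∀ i, Λ i = ⋃ k, ⋃ t ∈ T i k, (fun x => (Q ^ n) x + t) '' Λ k) ∧
      (∀ i, ∀ k k' : Fin m, ∀ t ∈ T i k, ∀ t' ∈ T i k', (k, t) ≠ (k', t') →
        Disjoint ((fun x => (Q ^ n) x + t) '' Λ k) ((fun x => (Q ^ n) x + t') '' Λ k')) := by
  induction n with
  | zero =>
    classical
    refine ⟨fun i k => if i = k then {0} else ∅, ?_, ?_, ?_⟩
    · intro i k
      by_cases h : i = k <;> simp [h, Matrix.one_apply]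
    · intro i
      ext y
      simp only [pow_zero, Set.mem_iUnion, Module.End.one_apply, exists_prop]
      constructor
      · intro hy
        exact ⟨i, 0, by simp, y, hy, by simp⟩
      · rintro ⟨k, t, ht, x, hx, rfl⟩
        by_cases h : i = k
        · subst h
          simp at ht
          subst ht
          simpa using hx
        · simp [if_neg h] at ht
    · intro i k k' t ht t' ht' hne'
      exfalso
      by_cases h : i = k
      · subst h
        simp at ht
        by_cases h' : i = k'
        · subst h'
          simp at ht'
          exact hne' (by rw [ht, ht'])
        · simp [if_neg h'] at ht'
      · simp [if_neg h] at ht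
  | succ n IH =>
    classical
    obtain ⟨T, hcard, hun, hdis⟩ := IH
    have hsub : ∀ (j k : Fin m) (a t : E), t ∈ T j k →
        (fun x => (Q ^ (n+1)) x + (Q t + a)) '' Λ k ⊆ (fun x => Q x + a) '' Λ j := by
      intro j k a t ht
      rintro _ ⟨x, hx, rfl⟩
      refine ⟨(Q ^ n) x + t, ?_, ?_⟩
      · rw [hun j]
        simp only [Set.mem_iUnion, exists_prop]
        exact ⟨k, t, ht, x, hx, rfl⟩
      · show Q ((Q ^ n) x + t) + a = (Q ^ (n+1)) x + (Q t + a)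
        rw [map_add, pow_succ_apply]
        abel
    have hkey : ∀ (i j j' k : Fin m) (a a' t t' : E), a ∈ D i j → a' ∈ D i j' →
        t ∈ T j k → t' ∈ T j' k → Q t + a = Q t' + a' → j = j' ∧ a = a' ∧ t = t' := by
      intro i j j' k a a' t t' ha ha' ht ht' hQ
      have h1 : ¬ (j, a) ≠ (j', a') := by
        intro hne2
        obtain ⟨y, hy⟩ := (hne k).image (fun x => (Q ^ (n+1)) x + (Q t + a))
        have hy1 : y ∈ (fun x => Q x + a) '' Λ j := hsub j k a t ht hy
        have hy2 : y ∈ (fun x => Q x + a') '' Λ j' := by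
          apply hsub j' k a' t' ht'
          rwa [hQ] at hy
        exact Set.disjoint_left.1 (hdisj i j j' a ha a' ha' hne2) hy1 hy2
      rw [not_not, Prod.mk.injEq] at h1
      obtain ⟨hj, haa⟩ := h1
      refine ⟨hj, haa, hQinj ?_⟩
      rw [haa] at hQ
      exact add_right_cancel hQ
    refine ⟨fun i k => Finset.univ.biUnion
        (fun j => ((D i j) ×ˢ (T j k)).image (fun p => Q p.2 + p.1)), ?_, ?_, ?_⟩
    · intro i k
      rw [Finset.card_biUnion]
      · push_cast
        rw [pow_succ' S n, Matrix.mul_apply]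
        refine Finset.sum_congr rfl ?_
        intro j _
        rw [Finset.card_image_of_injOn, Finset.card_product]
        · push_cast
          rw [hS, hcard]
        · intro p hp q hq hpq
          simp only [Finset.coe_product, Set.mem_prod, Finset.mem_coe] at hp hq
          obtain ⟨-, ha, ht⟩ := hkey i j j k p.1 q.1 p.2 q.2 hp.1 hq.1 hp.2 hq.2 hpq
          exact Prod.ext ha ht
      · intro j _ j' hj' hjj'
        rw [Function.onFun, Finset.disjoint_left]
        intro s hs hs'
        simp only [Finset.mem_image, Finset.mem_product] at hs hs'
        obtain ⟨⟨a, t⟩, ⟨ha, ht⟩, rfl⟩ := hs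
        obtain ⟨⟨a', t'⟩, ⟨ha', ht'⟩, heq'⟩ := hs'
        exact hjj' (hkey i j j' k a a' t t' ha ha' ht ht' heq'.symm).1
    · intro i
      ext y
      simp only [Set.mem_iUnion, exists_prop, Finset.mem_biUnion, Finset.mem_univ,
        Finset.mem_image, Finset.mem_product, true_and, Set.mem_image]
      constructor
      · intro hy
        rw [heq i] at hy
        simp only [Set.mem_iUnion, exists_prop, Set.mem_image] at hy
        obtain ⟨j, a, ha, w, hw, rfl⟩ := hy
        rw [hun j] at hw
        simp only [Set.mem_iUnion, exists_prop, Set.mem_image] at hw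
        obtain ⟨k, t, ht, x, hx, rfl⟩ := hw
        refine ⟨k, Q t + a, ⟨j, ⟨a, t⟩, ⟨ha, ht⟩, rfl⟩, x, hx, ?_⟩
        show (Q ^ (n+1)) x + (Q t + a) = Q ((Q ^ n) x + t) + a
        rw [map_add, pow_succ_apply]; abel
      · rintro ⟨k, s, ⟨j, ⟨a, t⟩, ⟨ha, ht⟩, rfl⟩, x, hx, rfl⟩
        rw [heq i]
        simp only [Set.mem_iUnion, exists_prop, Set.mem_image]
        refine ⟨j, a, ha, (Q ^ n) x + t, ?_, ?_⟩
        · rw [hun j]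
          simp only [Set.mem_iUnion, exists_prop, Set.mem_image]
          exact ⟨k, t, ht, x, hx, rfl⟩
        · show Q ((Q ^ n) x + t) + a = (Q ^ (n+1)) x + (Q t + a)
          rw [map_add, pow_succ_apply]; abel
    · intro i k k' s hs s' hs' hne2
      simp only [Finset.mem_biUnion, Finset.mem_univ, Finset.mem_image,
        Finset.mem_product, true_and] at hs hs'
      obtain ⟨j, ⟨a, t⟩, ⟨ha, ht⟩, rfl⟩ := hs
      obtain ⟨j', ⟨a', t'⟩, ⟨ha', ht'⟩, rfl⟩ := hs'
      have hpiece : ∀ (k : Fin m) (a t : E),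
          (fun x => (Q ^ (n+1)) x + (Q t + a)) '' Λ k
            = (fun y => Q y + a) '' ((fun x => (Q ^ n) x + t) '' Λ k) := by
        intro k a t
        rw [Set.image_image]
        apply Set.image_congr'
        intro x
        rw [map_add, pow_succ_apply]; abel
      by_cases hja : (j, a) = (j', a')
      · rw [Prod.mk.injEq] at hja
        obtain ⟨hj, haa⟩ := hja
        subst hj; subst haa
        have hkt : (k, t) ≠ (k', t') := by
          intro hh
          rw [Prod.mk.injEq] at hh
          exact hne2 (by rw [hh.1, hh.2])
        rw [hpiece k a t, hpiece k' a t']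
        exact Set.disjoint_image_of_injective
          (fun y z hyz => hQinj (add_right_cancel hyz))
          (hdis j k k' t ht t' ht' hkt)
      · exact (hdisj i j j' a ha a' ha' hja).mono (hsub j k a t ht) (hsub j' k' a' t' ht')

lemma pow_apply_succ {R M : Type*} [CommSemiring R] [AddCommMonoid M] [Module R M]
    (f : M →ₗ[R] M) (n : ℕ) (x : M) : (f ^ (n+1)) x = f ((f ^ n) x) := by
  rw [pow_succ']; rfl

set_option maxHeartbeats 2000000 in
lemma norm_pow_bound (Q : E →ₗ[ℝ] E)
    (hQexp : ∀ z : ℂ, (Q.charpoly.map (algebraMap ℝ ℂ)).IsRoot z → 1 < ‖z‖) :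
    ∃ M : ℝ, 0 < M ∧ ∀ (n : ℕ) (x : E), ‖x‖ ≤ M * ‖(Q ^ n) x‖ := by
  rcases Nat.eq_zero_or_pos d with hd | hd
  · refine ⟨1, one_pos, ?_⟩
    intro n x
    subst hd
    have hx : x = 0 := Subsingleton.elim x 0
    subst hx
    simp
  -- setup
  set p : Polynomial ℂ := Q.charpoly.map (algebraMap ℝ ℂ) with hp
  have hmonic : (LinearMap.charpoly Q).Monic := LinearMap.charpoly_monic Q
  have hpne : p ≠ 0 := (hmonic.map _).ne_zero
  have hdeg : p.natDegree = d := by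
    rw [hp, hmonic.natDegree_map, LinearMap.charpoly_natDegree, finrank_euclideanSpace_fin]
  obtain ⟨z₀, hz₀⟩ : ∃ z : ℂ, p.IsRoot z := by
    apply Complex.exists_root
    rw [← Polynomial.natDegree_pos_iff_degree_pos, hdeg]
    exact hd
  set RA : Finset ℝ := p.roots.toFinset.image (‖·‖) with hRA
  have hRAne : RA.Nonempty := ⟨‖z₀‖, by
    simp only [hRA, Finset.mem_image, Multiset.mem_toFinset]
    exact ⟨z₀, (Polynomial.mem_roots hpne).2 hz₀, rfl⟩⟩
  set ρ : ℝ := RA.min' hRAne with hρ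
  have hρ1 : 1 < ρ := by
    rw [hρ, Finset.lt_min'_iff]
    intro y hy
    simp only [hRA, Finset.mem_image, Multiset.mem_toFinset] at hy
    obtain ⟨z, hz, rfl⟩ := hy
    exact hQexp z ((Polynomial.mem_roots hpne).1 hz)
  have hρle : ∀ z : ℂ, p.IsRoot z → ρ ≤ ‖z‖ := by
    intro z hz
    apply Finset.min'_le
    simp only [hRA, Finset.mem_image, Multiset.mem_toFinset]
    exact ⟨z, (Polynomial.mem_roots hpne).2 hz, rfl⟩
  -- transported maps
  set e : EuclideanSpace ℝ (Fin d) ≃ₗ[ℝ] (Fin d → ℝ) := WithLp.linearEquiv 2 ℝ (Fin d → ℝ) with he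
  set Q' : (Fin d → ℝ) →ₗ[ℝ] (Fin d → ℝ) := e.conj Q with hQ'
  have hcharQ' : Q'.charpoly = Q.charpoly := LinearEquiv.charpoly_conj e Q
  set A : Matrix (Fin d) (Fin d) ℝ := LinearMap.toMatrix' Q' with hA
  set Ac : Matrix (Fin d) (Fin d) ℂ := A.map (algebraMap ℝ ℂ) with hAc
  set L : (Fin d → ℂ) →ₗ[ℂ] (Fin d → ℂ) := Matrix.toLin' Ac with hL
  have hAchar : A.charpoly = Q.charpoly := by
    rw [hA, ← LinearMap.toMatrix_eq_toMatrix', LinearMap.charpoly_toMatrix, hcharQ']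
  have hcharL : L.charpoly = p := by
    have h2 : (LinearMap.toMatrix (Pi.basisFun ℂ (Fin d)) (Pi.basisFun ℂ (Fin d)) L) = Ac := by
      rw [LinearMap.toMatrix_eq_toMatrix', hL, LinearMap.toMatrix'_toLin']
    rw [← LinearMap.charpoly_toMatrix L (Pi.basisFun ℂ (Fin d)), h2, hAc, Matrix.charpoly_map,
      hAchar, hp]
  -- the coordinatewise complexification embedding
  set φ : (Fin d → ℝ) → (Fin d → ℂ) := fun x i => (x i : ℂ) with hφ
  have hφnorm : ∀ y : Fin d → ℝ, ‖φ y‖ = ‖y‖ := by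
    intro y
    rw [Pi.norm_def, Pi.norm_def]
    congr 1
    apply Finset.sup_congr rfl
    intro i _
    simp [hφ]
  have hφQ : ∀ x : Fin d → ℝ, L (φ x) = φ (Q' x) := by
    intro x
    have hx : Q' x = A.mulVec x := by rw [hA, ← Matrix.toLin'_apply, Matrix.toLin'_toMatrix']
    rw [hL, Matrix.toLin'_apply]
    funext i
    simp only [hφ, Matrix.mulVec, dotProduct, hAc, Matrix.map_apply, hx]
    push_cast
    rfl
  have hφQn : ∀ (n : ℕ) (x : Fin d → ℝ), (L ^ n) (φ x) = φ ((Q' ^ n) x) := by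
    intro n
    induction n with
    | zero => intro x; simp
    | succ n ih =>
      intro x
      rw [pow_apply_succ, pow_apply_succ, ih, hφQ]
  -- continuous linear map, unit, and spectrum
  set cL : (Fin d → ℂ) →L[ℂ] (Fin d → ℂ) := Module.End.toContinuousLinearMap (Fin d → ℂ) L
    with hcL
  have hspecL : ∀ z : ℂ, z ∈ spectrum ℂ L → p.IsRoot z := by
    intro z hz
    have hev : Module.End.HasEigenvalue L z := Module.End.hasEigenvalue_iff_mem_spectrum.mpr hz
    have hmin : (minpoly ℂ L).IsRoot z := Module.End.hasEigenvalue_iff_isRoot.mp hev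
    rw [← hcharL]
    exact hmin.dvd (LinearMap.minpoly_dvd_charpoly L)
  have h0 : (0:ℂ) ∉ spectrum ℂ L := by
    intro h0mem
    have := hQexp 0 (hspecL 0 h0mem)
    rw [norm_zero] at this
    linarith
  have hUnit : IsUnit cL := by
    rw [← spectrum.zero_notMem_iff ℂ]
    rw [hcL, AlgEquiv.spectrum_eq]
    exact h0
  obtain ⟨u, hu⟩ := hUnit
  set b : (Fin d → ℂ) →L[ℂ] (Fin d → ℂ) := ↑u⁻¹ with hb
  have hspec_b : ∀ z ∈ spectrum ℂ b, ‖z‖ ≤ ρ⁻¹ := by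
    intro z hz
    have hz0 : z ≠ 0 := by
      intro h0'
      rw [h0'] at hz
      exact spectrum.zero_notMem ℂ u⁻¹.isUnit hz
    have hzinv : (z⁻¹ : ℂ) ∈ spectrum ℂ (↑u : (Fin d → ℂ) →L[ℂ] (Fin d → ℂ)) := by
      have h := spectrum.inv_mem_iff (R := ℂ) (r := Units.mk0 z hz0) (a := u⁻¹)
      rw [inv_inv] at h
      simpa using h.mp (by simpa using hz)
    have hroot : p.IsRoot z⁻¹ := by
      apply hspecL
      rw [← AlgEquiv.spectrum_eq (Module.End.toContinuousLinearMap (Fin d → ℂ)) L, ← hcL, ← hu]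
      exact hzinv
    have h1 : ρ ≤ ‖z⁻¹‖ := hρle _ hroot
    rw [norm_inv] at h1
    have hzpos : 0 < ‖z‖ := by
      simpa using norm_pos_iff.mpr hz0
    have hρpos : 0 < ρ := lt_trans one_pos hρ1
    rw [← inv_inv ‖z‖]
    exact inv_anti₀ hρpos h1
  have hρpos : 0 < ρ := lt_trans one_pos hρ1
  have hsr : spectralRadius ℂ b ≤ ENNReal.ofReal ρ⁻¹ := by
    rw [spectralRadius]
    apply iSup₂_le
    intro z hz
    rw [← ENNReal.ofReal_coe_nnreal, coe_nnnorm]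
    exact ENNReal.ofReal_le_ofReal (hspec_b z hz)
  have hsrlt : spectralRadius ℂ b < 1 := by
    refine lt_of_le_of_lt hsr ?_
    rw [← ENNReal.ofReal_one]
    rw [ENNReal.ofReal_lt_ofReal_iff one_pos]
    rw [inv_lt_one_iff₀]
    right
    exact hρ1
  have hg := spectrum.pow_nnnorm_pow_one_div_tendsto_nhds_spectralRadius b
  obtain ⟨n₀, hn₀1, hn₀⟩ : ∃ n₀ : ℕ, 1 ≤ n₀ ∧ ((‖b ^ n₀‖₊ : ℝ≥0∞)) ^ (1/(n₀:ℝ)) < 1 := by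
    obtain ⟨n₀, hn₀⟩ := ((hg.eventually_lt_const hsrlt).and (Filter.eventually_ge_atTop 1)).exists
    exact ⟨n₀, hn₀.2, hn₀.1⟩
  have hbn₀ : ‖b ^ n₀‖ ≤ 1 := by
    by_contra hcon
    push_neg at hcon
    have h1 : (1:ℝ≥0∞) ≤ (‖b ^ n₀‖₊ : ℝ≥0∞) := by
      rw [← ENNReal.ofReal_coe_nnreal, coe_nnnorm, ← ENNReal.ofReal_one]
      exact ENNReal.ofReal_le_ofReal hcon.le
    have h2 : (1:ℝ≥0∞) ≤ ((‖b ^ n₀‖₊ : ℝ≥0∞)) ^ (1/(n₀:ℝ)) := by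
      calc (1:ℝ≥0∞) = 1 ^ (1/(n₀:ℝ)) := (ENNReal.one_rpow _).symm
        _ ≤ _ := ENNReal.rpow_le_rpow h1 (by positivity)
    exact absurd hn₀ (not_lt.mpr h2)
  set M₀ : ℝ := 1 + ∑ s ∈ Finset.range n₀, ‖b ^ s‖ with hM₀
  have hM₀pos : 0 < M₀ := by
    have : 0 ≤ ∑ s ∈ Finset.range n₀, ‖b ^ s‖ :=
      Finset.sum_nonneg (fun s _ => norm_nonneg _)
    linarith
  have hbn : ∀ n : ℕ, ‖b ^ n‖ ≤ M₀ := by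
    intro n
    induction n using Nat.strong_induction_on with
    | _ n ih =>
      rcases lt_or_ge n n₀ with h | h
      · have := Finset.single_le_sum (f := fun s => ‖b ^ s‖)
          (fun i _ => norm_nonneg _) (Finset.mem_range.mpr h)
        linarith
      · have hsplit : b ^ n = b ^ n₀ * b ^ (n - n₀) := by
          rw [← pow_add]
          congr 1
          omega
        rw [hsplit]
        calc ‖b ^ n₀ * b ^ (n - n₀)‖ ≤ ‖b ^ n₀‖ * ‖b ^ (n - n₀)‖ := norm_mul_le _ _
          _ ≤ 1 * M₀ := mul_le_mul hbn₀ (ih _ (by omega)) (norm_nonneg _) zero_le_one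
          _ = M₀ := one_mul _
  -- applying powers
  have hcLn : ∀ (n : ℕ) (w : Fin d → ℂ), (cL ^ n) w = (L ^ n) w := by
    intro n w
    rw [hcL, ← map_pow]
    rfl
  have happ : ∀ (n : ℕ) (w : Fin d → ℂ), (b ^ n) ((cL ^ n) w) = w := by
    intro n w
    have hprod : b ^ n * cL ^ n = 1 := by
      rw [hb, ← hu, ← Units.val_pow_eq_pow_val, ← Units.val_pow_eq_pow_val, ← Units.val_mul,
        inv_pow, inv_mul_cancel]
      rfl
    calc (b ^ n) ((cL ^ n) w) = (b ^ n * cL ^ n) w := rfl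
      _ = w := by rw [hprod]; rfl
  -- norm comparisons between the euclidean and sup norms
  set ce : (Fin d → ℝ) →L[ℝ] EuclideanSpace ℝ (Fin d) :=
    LinearMap.toContinuousLinearMap (e.symm : (Fin d → ℝ) →ₗ[ℝ] EuclideanSpace ℝ (Fin d)) with hce
  set cf : EuclideanSpace ℝ (Fin d) →L[ℝ] (Fin d → ℝ) :=
    LinearMap.toContinuousLinearMap (e : EuclideanSpace ℝ (Fin d) →ₗ[ℝ] (Fin d → ℝ)) with hcf
  have hC1 : ∀ x : EuclideanSpace ℝ (Fin d), ‖x‖ ≤ ‖ce‖ * ‖e x‖ := by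
    intro x
    have := ce.le_opNorm (e x)
    have hx' : ce (e x) = x := e.symm_apply_apply x
    rw [hx'] at this
    exact this
  have hC2 : ∀ y : EuclideanSpace ℝ (Fin d), ‖e y‖ ≤ ‖cf‖ * ‖y‖ := by
    intro y
    exact cf.le_opNorm y
  -- conjugation of powers
  have hconjpow : ∀ (n : ℕ) (x : EuclideanSpace ℝ (Fin d)), (Q' ^ n) (e x) = e ((Q ^ n) x) := by
    intro n
    induction n with
    | zero => intro x; simp
    | succ n ih =>
      intro x
      rw [pow_apply_succ, pow_apply_succ, ih, hQ', LinearEquiv.conj_apply]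
      simp
  refine ⟨‖ce‖ * M₀ * ‖cf‖ + 1, by positivity, ?_⟩
  intro n x
  have key : ‖x‖ ≤ ‖ce‖ * M₀ * ‖cf‖ * ‖(Q ^ n) x‖ := by
    have h1 : ‖x‖ ≤ ‖ce‖ * ‖e x‖ := hC1 x
    have h2 : ‖e x‖ = ‖φ (e x)‖ := (hφnorm (e x)).symm
    have h3 : φ (e x) = (b ^ n) ((cL ^ n) (φ (e x))) := (happ n (φ (e x))).symm
    have h4 : ‖(b ^ n) ((cL ^ n) (φ (e x)))‖ ≤ M₀ * ‖(cL ^ n) (φ (e x))‖ := by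
      calc ‖(b ^ n) ((cL ^ n) (φ (e x)))‖ ≤ ‖b ^ n‖ * ‖(cL ^ n) (φ (e x))‖ :=
            (b ^ n).le_opNorm _
        _ ≤ M₀ * ‖(cL ^ n) (φ (e x))‖ :=
            mul_le_mul_of_nonneg_right (hbn n) (norm_nonneg _)
    have h5 : (cL ^ n) (φ (e x)) = φ ((Q' ^ n) (e x)) := by rw [hcLn, hφQn]
    have h6 : ‖φ ((Q' ^ n) (e x))‖ = ‖(Q' ^ n) (e x)‖ := hφnorm _
    have h7 : (Q' ^ n) (e x) = e ((Q ^ n) x) := hconjpow n x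
    have h8 : ‖e ((Q ^ n) x)‖ ≤ ‖cf‖ * ‖(Q ^ n) x‖ := hC2 _
    have hcenn : (0:ℝ) ≤ ‖ce‖ := norm_nonneg _
    calc ‖x‖ ≤ ‖ce‖ * ‖e x‖ := h1
      _ = ‖ce‖ * ‖(b ^ n) ((cL ^ n) (φ (e x)))‖ := by rw [← h3, ← h2]
      _ ≤ ‖ce‖ * (M₀ * ‖(cL ^ n) (φ (e x))‖) := mul_le_mul_of_nonneg_left h4 hcenn
      _ = ‖ce‖ * M₀ * ‖e ((Q ^ n) x)‖ := by rw [h5, h6, h7]; ring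
      _ ≤ ‖ce‖ * M₀ * (‖cf‖ * ‖(Q ^ n) x‖) :=
            mul_le_mul_of_nonneg_left h8 (by positivity)
      _ = ‖ce‖ * M₀ * ‖cf‖ * ‖(Q ^ n) x‖ := by ring
  have : ‖ce‖ * M₀ * ‖cf‖ * ‖(Q ^ n) x‖ ≤ (‖ce‖ * M₀ * ‖cf‖ + 1) * ‖(Q ^ n) x‖ := by
    apply mul_le_mul_of_nonneg_right _ (norm_nonneg _)
    linarith
  linarith

lemma det_ne_zero (Q : E →ₗ[ℝ] E)
    (hQexp : ∀ z : ℂ, (Q.charpoly.map (algebraMap ℝ ℂ)).IsRoot z → 1 < ‖z‖) :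
    LinearMap.det Q ≠ 0 := by
  intro h
  have hc : Q.charpoly.coeff 0 = 0 := by
    have hd := LinearMap.det_eq_sign_charpoly_coeff Q
    rw [h] at hd
    rcases mul_eq_zero.mp hd.symm with h1 | h1
    · exact absurd h1 (pow_ne_zero _ (by norm_num))
    · exact h1
  have hroot : (Q.charpoly.map (algebraMap ℝ ℂ)).IsRoot 0 := by
    rw [Polynomial.IsRoot, ← Polynomial.coeff_zero_eq_eval_zero, Polynomial.coeff_map, hc]
    simp
  have := hQexp 0 hroot
  rw [norm_zero] at this
  linarith

lemma nat_mul_le_of_ennreal {n : ℕ} {a b : ℝ} (ha : 0 ≤ a) (hb : 0 ≤ b)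
    (h : (n : ℝ≥0∞) * (ENNReal.ofReal a * volume (ball (0:E) 1))
      ≤ ENNReal.ofReal b * volume (ball (0:E) 1)) : (n : ℝ) * a ≤ b := by
  rw [← mul_assoc] at h
  rw [ENNReal.mul_le_mul_iff_left (measure_ball_pos volume _ one_pos).ne'
    measure_ball_lt_top.ne] at h
  rw [← ENNReal.ofReal_natCast n, ← ENNReal.ofReal_mul (by positivity)] at h
  rwa [ENNReal.ofReal_le_ofReal_iff hb] at h

lemma ennreal_le_nat_mul {n : ℕ} {a b : ℝ} (hb : 0 ≤ b)
    (h : ENNReal.ofReal a * volume (ball (0:E) 1)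
      ≤ (n : ℝ≥0∞) * (ENNReal.ofReal b * volume (ball (0:E) 1))) : a ≤ (n : ℝ) * b := by
  rw [← mul_assoc] at h
  rw [ENNReal.mul_le_mul_iff_left (measure_ball_pos volume _ one_pos).ne'
    measure_ball_lt_top.ne] at h
  rw [← ENNReal.ofReal_natCast n, ← ENNReal.ofReal_mul (by positivity)] at h
  rwa [ENNReal.ofReal_le_ofReal_iff (by positivity)] at h

lemma ncard_biUnion {α : Type*} (I : Finset α) (f : α → Set E)
    (hfin : ∀ a ∈ I, (f a).Finite)
    (hdisj : ∀ a ∈ I, ∀ b ∈ I, a ≠ b → Disjoint (f a) (f b)) :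
    (⋃ a ∈ I, f a).ncard = ∑ a ∈ I, (f a).ncard := by
  classical
  induction I using Finset.induction_on with
  | empty => simp
  | insert a I' hnotmem ih =>
    rw [Finset.sum_insert hnotmem]
    have hrest : (⋃ b ∈ I', f b).Finite :=
      Set.Finite.biUnion I'.finite_toSet (fun b hb => hfin b (Finset.mem_insert_of_mem hb))
    have hUeq : (⋃ b ∈ insert a I', f b) = f a ∪ ⋃ b ∈ I', f b := by
      simp [Set.iUnion_iUnion_eq_or_left]
    rw [hUeq]
    have hdisj2 : Disjoint (f a) (⋃ b ∈ I', f b) := by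
      rw [Set.disjoint_iUnion₂_right]
      intro b hb
      exact hdisj a (Finset.mem_insert_self a I') b (Finset.mem_insert_of_mem hb)
        (fun h => hnotmem (h ▸ hb))
    rw [Set.ncard_union_eq hdisj2 (hfin a (Finset.mem_insert_self a I')) hrest]
    rw [ih (fun b hb => hfin b (Finset.mem_insert_of_mem hb))
      (fun b hb c hc hbc => hdisj b (Finset.mem_insert_of_mem hb) c
        (Finset.mem_insert_of_mem hc) hbc)]

lemma le_of_pow_bounded {x y a b : ℝ} (hx : 0 < x) (hy : 0 < y) (ha : 0 < a) (hb : 0 < b)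
    (h : ∀ n : ℕ, a * x ^ n ≤ b * y ^ n) : x ≤ y := by
  by_contra hlt
  push_neg at hlt
  have hratio : 1 < x / y := (one_lt_div hy).mpr hlt
  obtain ⟨n, hn⟩ := pow_unbounded_of_one_lt (b / a) hratio
  have h1 : a * x ^ n ≤ b * y ^ n := h n
  have h2 : (x / y) ^ n ≤ b / a := by
    rw [div_pow, div_le_div_iff₀ (by positivity) ha]
    nlinarith [pow_pos hx n, pow_pos hy n]
  exact absurd hn (not_lt.mpr h2)

end PfAux

set_option maxHeartbeats 2000000 in
theorem pf_eigenvalue_eq_abs_det {d m : ℕ} (hm : 0 < m)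
    (Λ : Fin m → Set (EuclideanSpace ℝ (Fin d)))
    (hΛ : ∀ i, IsDelone (Λ i)) (hU : IsDelone (⋃ i, Λ i))
    (Q : EuclideanSpace ℝ (Fin d) →ₗ[ℝ] EuclideanSpace ℝ (Fin d))
    (hQexp : ∀ z : ℂ, (Q.charpoly.map (algebraMap ℝ ℂ)).IsRoot z → 1 < ‖z‖)
    (D : Fin m → Fin m → Finset (EuclideanSpace ℝ (Fin d)))
    (heq : ∀ i, Λ i = ⋃ j, ⋃ a ∈ D i j, (fun x => Q x + a) '' Λ j)
    (hdisj : ∀ i, ∀ j j' : Fin m, ∀ a ∈ D i j, ∀ a' ∈ D i j', (j, a) ≠ (j', a') →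
      Disjoint ((fun x => Q x + a) '' Λ j) ((fun x => Q x + a') '' Λ j'))
    (S : Matrix (Fin m) (Fin m) ℝ) (hS : ∀ i j, S i j = (D i j).card)
    (hprim : ∃ n : ℕ, ∀ i j, 0 < (S ^ n) i j)
    (lam : ℝ) (hlam : 0 < lam)
    (v : Fin m → ℝ) (hv : ∀ i, 0 < v i) (heig : S.mulVec v = lam • v) :
    lam = |LinearMap.det Q| := by
  classical
  obtain ⟨Mb, hMbpos, hMb⟩ := PfAux.norm_pow_bound Q hQexp
  have hdet : LinearMap.det Q ≠ 0 := PfAux.det_ne_zero Q hQexp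
  have hδpos : 0 < |LinearMap.det Q| := abs_pos.mpr hdet
  set δ : ℝ := |LinearMap.det Q| with hδ
  have hQinj : Function.Injective ⇑Q := (LinearMap.equivOfDetNeZero Q hdet).injective
  have hdetn : ∀ n : ℕ, LinearMap.det (Q ^ n) ≠ 0 := fun n => by
    rw [map_pow]; exact pow_ne_zero n hdet
  have habs_detn : ∀ n : ℕ, |LinearMap.det (Q ^ n)| = δ ^ n := fun n => by
    rw [map_pow, abs_pow, hδ]
  set Qn : (n : ℕ) → (EuclideanSpace ℝ (Fin d) ≃ₗ[ℝ] EuclideanSpace ℝ (Fin d)) :=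
    fun n => LinearMap.equivOfDetNeZero (Q ^ n) (hdetn n) with hQn
  have hQnsymm : ∀ (n : ℕ) (y : EuclideanSpace ℝ (Fin d)),
      (Q ^ n) ((Qn n).symm y) = y := fun n y => (Qn n).apply_symm_apply y
  have hQninj : ∀ n : ℕ, Function.Injective
      ⇑(Q ^ n : EuclideanSpace ℝ (Fin d) →ₗ[ℝ] EuclideanSpace ℝ (Fin d)) :=
    fun n => (Qn n).injective
  have hne : ∀ i, (Λ i).Nonempty := by
    intro i
    obtain ⟨R', hR', hrel⟩ := (hΛ i).2
    obtain ⟨x, hx, -⟩ := hrel 0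
    exact ⟨x, hx⟩
  choose r hrpos hrud using fun i => (hΛ i).1
  choose R hRpos hRrel using fun i => (hΛ i).2
  haveI : Nonempty (Fin m) := ⟨⟨0, hm⟩⟩
  set i0 : Fin m := ⟨0, hm⟩ with hi0
  set Rmax : ℝ := Finset.univ.sup' Finset.univ_nonempty R with hRmax
  have hRmax_ge : ∀ k, R k ≤ Rmax := fun k => Finset.le_sup' R (Finset.mem_univ k)
  have hRmaxpos : 0 < Rmax := lt_of_lt_of_le (hRpos i0) (hRmax_ge i0)
  set T : ℝ := Mb * Rmax + Rmax + 1 with hT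
  have hTpos : 0 < T := by nlinarith [mul_pos hMbpos hRmaxpos]
  have hTR : ∀ k, 0 < T - R k := fun k => by
    have := hRmax_ge k
    nlinarith [mul_pos hMbpos hRmaxpos]
  have hTMR : 0 < T - Mb * R i0 := by
    have h1 := hRmax_ge i0
    have h2 := hRpos i0
    nlinarith [hMbpos]
  -- finiteness of intersections with closed balls
  have hfinball : ∀ (k : Fin m) (z : EuclideanSpace ℝ (Fin d)) (T' : ℝ), 0 ≤ T' →
      (Λ k ∩ Metric.closedBall z T').Finite := by
    intro k z T' hT'
    refine (PfAux.count_pack (hrpos k) (hrud k) (A := Metric.closedBall z T')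
      (A' := Metric.closedBall z (T' + r k)) MeasureTheory.measure_closedBall_lt_top.ne ?_).1
    intro x hx w hw
    rw [Metric.mem_closedBall] at hw ⊢
    have h1 : dist x z ≤ T' := hx.2
    have h2 := dist_triangle w x z
    have := hrpos k
    linarith
  -- counting function
  set cnt : Fin m → EuclideanSpace ℝ (Fin d) → ℕ :=
    fun k z => (Λ k ∩ Metric.closedBall z T).ncard with hcnt
  have hcnt_ub : ∀ k z, (cnt k z : ℝ) * (r k / 2) ^ d ≤ (T + r k) ^ d := by
    intro k z
    have hrk := hrpos k
    have hrk2 : (0:ℝ) ≤ r k / 2 := by linarith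
    have h2 := (PfAux.count_pack (hrpos k) (hrud k) (A := Metric.closedBall z T)
      (A' := Metric.closedBall z (T + r k)) MeasureTheory.measure_closedBall_lt_top.ne (by
        intro x hx w hw
        rw [Metric.mem_closedBall] at hw ⊢
        have h1 : dist x z ≤ T := hx.2
        have h2 := dist_triangle w x z
        linarith)).2
    rw [PfAux.vol_cb (0 : EuclideanSpace ℝ (Fin d)) hrk2,
      PfAux.vol_cb z (by linarith)] at h2
    exact PfAux.nat_mul_le_of_ennreal (pow_nonneg hrk2 d) (pow_nonneg (by linarith) d) h2
  have hcnt_lb : ∀ k z, (T - R k) ^ d ≤ (cnt k z : ℝ) * (R k) ^ d := by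
    intro k z
    have h2 := PfAux.count_cover (hRrel k) (A := Metric.closedBall z (T - R k))
      (A' := Metric.closedBall z T) (hfinball k z T hTpos.le) (by
        intro z' hz' x hdx
        rw [Metric.mem_closedBall] at hz' ⊢
        have h3 := dist_triangle x z' z
        rw [dist_comm x z'] at h3
        linarith)
    rw [PfAux.vol_cb z (hTR k).le, PfAux.vol_cb (0 : EuclideanSpace ℝ (Fin d)) (hRpos k).le]
      at h2
    exact PfAux.ennreal_le_nat_mul (pow_nonneg (hRpos k).le d) h2
  -- comparison constants
  set ck : Fin m → ℝ := fun k => (T - R k) ^ d / (R k) ^ d with hckdef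
  set Ck : Fin m → ℝ := fun k => (T + r k) ^ d / (r k / 2) ^ d with hCkdef
  have hckpos : ∀ k, 0 < ck k := fun k => div_pos (pow_pos (hTR k) d) (pow_pos (hRpos k) d)
  have hCkpos : ∀ k, 0 < Ck k := fun k => by
    have := hrpos k
    exact div_pos (pow_pos (by linarith) d) (pow_pos (by linarith) d)
  have hcnt_ge : ∀ k z, ck k ≤ (cnt k z : ℝ) := fun k z => by
    rw [hckdef, div_le_iff₀ (pow_pos (hRpos k) d)]
    exact hcnt_lb k z
  have hcnt_le : ∀ k z, (cnt k z : ℝ) ≤ Ck k := fun k z => by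
    have := hrpos k
    rw [hCkdef, le_div_iff₀ (pow_pos (by linarith) d)]
    exact hcnt_ub k z
  set α : ℝ := Finset.univ.inf' Finset.univ_nonempty (fun k => ck k / v k) with hα
  have hαpos : 0 < α := by
    rw [hα, Finset.lt_inf'_iff]
    intro k _
    exact div_pos (hckpos k) (hv k)
  have hα_le : ∀ k, α * v k ≤ ck k := fun k => by
    have h1 : α ≤ ck k / v k := by
      rw [hα]; exact Finset.inf'_le (fun k => ck k / v k) (Finset.mem_univ k)
    exact (le_div_iff₀ (hv k)).mp h1
  set β : ℝ := Finset.univ.sup' Finset.univ_nonempty (fun k => Ck k / v k) with hβ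
  have hβ_ge : ∀ k, Ck k ≤ β * v k := fun k => by
    have h1 : Ck k / v k ≤ β := by
      rw [hβ]; exact Finset.le_sup' (fun k => Ck k / v k) (Finset.mem_univ k)
    exact (div_le_iff₀ (hv k)).mp h1
  have hβpos : 0 < β := by
    refine lt_of_lt_of_le (div_pos (hCkpos i0) (hv i0)) ?_
    rw [hβ]; exact Finset.le_sup' (fun k => Ck k / v k) (Finset.mem_univ i0)
  -- eigenvalue equation for powers
  have hSn : ∀ n : ℕ, (S ^ n).mulVec v = (lam ^ n) • v := by
    intro n
    induction n with
    | zero => simp [Matrix.one_mulVec]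
    | succ n ih =>
      rw [pow_succ' S n, ← Matrix.mulVec_mulVec, ih, Matrix.mulVec_smul, heig, smul_smul,
        ← pow_succ]
  have hsum_v : ∀ n : ℕ, ∑ k, (S ^ n) i0 k * v k = lam ^ n * v i0 := by
    intro n
    have h1 := congrFun (hSn n) i0
    simpa [Matrix.mulVec, dotProduct] using h1
  -- the main two-sided estimates
  have main : ∀ n : ℕ,
      (α * v i0 * lam ^ n ≤ ((Λ i0 ∩ (⇑(Q ^ n) '' Metric.closedBall 0 T)).ncard : ℝ)) ∧
      (((Λ i0 ∩ (⇑(Q ^ n) '' Metric.closedBall 0 T)).ncard : ℝ) ≤ β * v i0 * lam ^ n) ∧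
      (δ ^ n * (T - Mb * R i0) ^ d
        ≤ ((Λ i0 ∩ (⇑(Q ^ n) '' Metric.closedBall 0 T)).ncard : ℝ) * (R i0) ^ d) ∧
      (((Λ i0 ∩ (⇑(Q ^ n) '' Metric.closedBall 0 T)).ncard : ℝ) * (r i0 / 2) ^ d
        ≤ δ ^ n * (T + Mb * r i0) ^ d) := by
    intro n
    obtain ⟨W, hWcard, hWun, hWdis⟩ := PfAux.decomp Λ hne Q hQinj D heq hdisj S hS n
    set A : Set (EuclideanSpace ℝ (Fin d)) := ⇑(Q ^ n) '' Metric.closedBall 0 T with hA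
    have hpieceA : ∀ (k : Fin m) (t : EuclideanSpace ℝ (Fin d)),
        ((fun x => (Q ^ n) x + t) '' Λ k) ∩ A
          = (fun x => (Q ^ n) x + t) '' (Λ k ∩ Metric.closedBall ((Qn n).symm (-t)) T) := by
      intro k t
      ext y
      constructor
      · rintro ⟨⟨x, hx, rfl⟩, w, hw, hwq⟩
        refine ⟨x, ⟨hx, ?_⟩, rfl⟩
        rw [Metric.mem_closedBall, dist_eq_norm]
        have hxw : x - (Qn n).symm (-t) = w := by
          apply hQninj n
          rw [map_sub, hQnsymm n, hwq, sub_neg_eq_add]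
        rw [hxw]
        simpa [dist_eq_norm] using hw
      · rintro ⟨x, ⟨hx, hxc⟩, rfl⟩
        refine ⟨⟨x, hx, rfl⟩, x - (Qn n).symm (-t), ?_, ?_⟩
        · rw [Metric.mem_closedBall, dist_zero_right]
          rw [Metric.mem_closedBall, dist_eq_norm] at hxc
          exact hxc
        · rw [map_sub, hQnsymm n, sub_neg_eq_add]
    have hsplit : Λ i0 ∩ A = ⋃ p ∈ Finset.univ.sigma (fun k : Fin m => W i0 k),
        (((fun x => (Q ^ n) x + p.2) '' Λ p.1) ∩ A) := by
      conv_lhs => rw [hWun i0]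
      ext y
      simp only [Set.mem_iUnion, Set.mem_inter_iff, Finset.mem_sigma, Finset.mem_univ,
        true_and, exists_prop]
      constructor
      · rintro ⟨⟨k, t, ht, hy⟩, hyA⟩
        exact ⟨⟨k, t⟩, ht, hy, hyA⟩
      · rintro ⟨⟨k, t⟩, ht, hy, hyA⟩
        exact ⟨⟨k, t, ht, hy⟩, hyA⟩
    have hfinA : (Λ i0 ∩ A).Finite := by
      rw [hsplit]
      apply Set.Finite.biUnion (Finset.univ.sigma (fun k : Fin m => W i0 k)).finite_toSet
      rintro ⟨k, t⟩ _
      rw [hpieceA]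
      exact (hfinball k _ T hTpos.le).image _
    have hcount : ((Λ i0 ∩ A).ncard : ℝ)
        = ∑ k, ∑ t ∈ W i0 k, (cnt k ((Qn n).symm (-t)) : ℝ) := by
      rw [hsplit, PfAux.ncard_biUnion]
      · rw [Finset.sum_sigma]
        push_cast
        refine Finset.sum_congr rfl (fun k _ => Finset.sum_congr rfl (fun t ht => ?_))
        rw [hpieceA k t, Set.ncard_image_of_injective _
          (fun x y hxy => hQninj n (add_right_cancel hxy))]
      · rintro ⟨k, t⟩ _
        rw [hpieceA]
        exact (hfinball k _ T hTpos.le).image _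
      · rintro ⟨k, t⟩ hkt ⟨k', t'⟩ hkt' hne'
        have h1 : (k, t) ≠ (k', t') := by
          intro hh
          rw [Prod.mk.injEq] at hh
          apply hne'
          rw [hh.1, hh.2]
        have h2 := hWdis i0 k k' t (Finset.mem_sigma.mp hkt).2 t'
          (Finset.mem_sigma.mp hkt').2 h1
        exact h2.mono Set.inter_subset_left Set.inter_subset_left
    have hcard_nonneg : ∀ k, (0:ℝ) ≤ (S ^ n) i0 k := fun k => by
      rw [← hWcard i0 k]; exact Nat.cast_nonneg _
    constructor
    · -- lower bound via lam
      rw [hcount]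
      have h1 : ∀ k, (S ^ n) i0 k * (α * v k)
          ≤ ∑ t ∈ W i0 k, (cnt k ((Qn n).symm (-t)) : ℝ) := by
        intro k
        calc (S ^ n) i0 k * (α * v k) ≤ (S ^ n) i0 k * ck k :=
              mul_le_mul_of_nonneg_left (hα_le k) (hcard_nonneg k)
          _ = ∑ t ∈ W i0 k, ck k := by
              rw [Finset.sum_const, ← hWcard i0 k, nsmul_eq_mul]
          _ ≤ _ := Finset.sum_le_sum (fun t _ => hcnt_ge k _)
      calc α * v i0 * lam ^ n = α * (lam ^ n * v i0) := by ring
        _ = α * ∑ k, (S ^ n) i0 k * v k := by rw [hsum_v n]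
        _ = ∑ k, (S ^ n) i0 k * (α * v k) := by
            rw [Finset.mul_sum]
            exact Finset.sum_congr rfl (fun k _ => by ring)
        _ ≤ _ := Finset.sum_le_sum (fun k _ => h1 k)
    refine ⟨?_, ?_, ?_⟩
    · -- upper bound via lam
      rw [hcount]
      have h1 : ∀ k, (∑ t ∈ W i0 k, (cnt k ((Qn n).symm (-t)) : ℝ))
          ≤ (S ^ n) i0 k * (β * v k) := by
        intro k
        calc (∑ t ∈ W i0 k, (cnt k ((Qn n).symm (-t)) : ℝ))
            ≤ ∑ t ∈ W i0 k, Ck k := Finset.sum_le_sum (fun t _ => hcnt_le k _)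
          _ = (S ^ n) i0 k * Ck k := by
              rw [Finset.sum_const, ← hWcard i0 k, nsmul_eq_mul]
          _ ≤ (S ^ n) i0 k * (β * v k) :=
              mul_le_mul_of_nonneg_left (hβ_ge k) (hcard_nonneg k)
      calc (∑ k, ∑ t ∈ W i0 k, (cnt k ((Qn n).symm (-t)) : ℝ))
          ≤ ∑ k, (S ^ n) i0 k * (β * v k) := Finset.sum_le_sum (fun k _ => h1 k)
        _ = β * ∑ k, (S ^ n) i0 k * v k := by
            rw [Finset.mul_sum]
            exact Finset.sum_congr rfl (fun k _ => by ring)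
        _ = β * (lam ^ n * v i0) := by rw [hsum_v n]
        _ = β * v i0 * lam ^ n := by ring
    · -- lower bound via volume
      have hcov : ∀ z ∈ ⇑(Q ^ n) '' Metric.closedBall (0 : EuclideanSpace ℝ (Fin d))
          (T - Mb * R i0), ∀ x, dist z x ≤ R i0 → x ∈ A := by
        rintro z ⟨bb, hbb, rfl⟩ x hdx
        refine ⟨(Qn n).symm x, ?_, hQnsymm n x⟩
        rw [Metric.mem_closedBall, dist_zero_right] at hbb ⊢
        have h3 : (Q ^ n) ((Qn n).symm x - bb) = x - (Q ^ n) bb := by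
          rw [map_sub, hQnsymm n]
        have h4 := hMb n ((Qn n).symm x - bb)
        rw [h3] at h4
        have h5 : ‖x - (Q ^ n) bb‖ ≤ R i0 := by
          rw [← dist_eq_norm, dist_comm]
          exact hdx
        have h6 : ‖(Qn n).symm x - bb‖ ≤ Mb * R i0 :=
          le_trans h4 (mul_le_mul_of_nonneg_left h5 hMbpos.le)
        calc ‖(Qn n).symm x‖ = ‖((Qn n).symm x - bb) + bb‖ := by rw [sub_add_cancel]
          _ ≤ ‖(Qn n).symm x - bb‖ + ‖bb‖ := norm_add_le _ _
          _ ≤ Mb * R i0 + (T - Mb * R i0) := add_le_add h6 hbb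
          _ = T := by ring
      have h2 := PfAux.count_cover (hRrel i0)
        (A := ⇑(Q ^ n) '' Metric.closedBall 0 (T - Mb * R i0)) (A' := A) hfinA hcov
      rw [MeasureTheory.Measure.addHaar_image_linearMap, habs_detn n,
        PfAux.vol_cb (0 : EuclideanSpace ℝ (Fin d)) hTMR.le,
        PfAux.vol_cb (0 : EuclideanSpace ℝ (Fin d)) (hRpos i0).le,
        ← mul_assoc, ← ENNReal.ofReal_mul (by positivity)] at h2
      exact PfAux.ennreal_le_nat_mul (pow_nonneg (hRpos i0).le d) h2
    · -- upper bound via volume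
      have hsub : ∀ x ∈ Λ i0 ∩ A, Metric.closedBall x (r i0 / 2) ⊆
          ⇑(Q ^ n) '' Metric.closedBall 0 (T + Mb * r i0) := by
        rintro x ⟨hxΛ, bb, hbb, rfl⟩ w hw
        refine ⟨(Qn n).symm w, ?_, hQnsymm n w⟩
        rw [Metric.mem_closedBall, dist_zero_right] at hbb ⊢
        rw [Metric.mem_closedBall] at hw
        have h3 : (Q ^ n) ((Qn n).symm w - bb) = w - (Q ^ n) bb := by
          rw [map_sub, hQnsymm n]
        have h4 := hMb n ((Qn n).symm w - bb)
        rw [h3] at h4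
        have h5 : ‖w - (Q ^ n) bb‖ ≤ r i0 / 2 := by
          rw [← dist_eq_norm]
          exact hw
        have h6 : ‖(Qn n).symm w - bb‖ ≤ Mb * (r i0 / 2) :=
          le_trans h4 (mul_le_mul_of_nonneg_left h5 hMbpos.le)
        have hr0 := hrpos i0
        calc ‖(Qn n).symm w‖ = ‖((Qn n).symm w - bb) + bb‖ := by rw [sub_add_cancel]
          _ ≤ ‖(Qn n).symm w - bb‖ + ‖bb‖ := norm_add_le _ _
          _ ≤ Mb * (r i0 / 2) + T := add_le_add h6 hbb
          _ ≤ T + Mb * r i0 := by nlinarith [hMbpos]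
      have hA'fin : MeasureTheory.volume (⇑(Q ^ n) '' Metric.closedBall (0 : EuclideanSpace ℝ (Fin d))
          (T + Mb * r i0)) ≠ ⊤ := by
        rw [MeasureTheory.Measure.addHaar_image_linearMap]
        exact ENNReal.mul_ne_top ENNReal.ofReal_ne_top MeasureTheory.measure_closedBall_lt_top.ne
      have h2 := (PfAux.count_pack (hrpos i0) (hrud i0) (A := A)
        (A' := ⇑(Q ^ n) '' Metric.closedBall 0 (T + Mb * r i0)) hA'fin hsub).2
      rw [MeasureTheory.Measure.addHaar_image_linearMap, habs_detn n,
        PfAux.vol_cb (0 : EuclideanSpace ℝ (Fin d)) (by linarith [hrpos i0] : (0:ℝ) ≤ r i0 / 2),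
        PfAux.vol_cb (0 : EuclideanSpace ℝ (Fin d))
          (by nlinarith [hMbpos, hrpos i0, mul_pos hMbpos (hrpos i0)] : (0:ℝ) ≤ T + Mb * r i0),
        ← mul_assoc (ENNReal.ofReal (δ ^ n)), ← ENNReal.ofReal_mul (by positivity)] at h2
      exact PfAux.nat_mul_le_of_ennreal (pow_nonneg (by nlinarith [hrpos i0] : (0:ℝ) ≤ r i0 / 2) d)
        (mul_nonneg (pow_nonneg hδpos.le n) (pow_nonneg
          (by nlinarith [hMbpos, hrpos i0, mul_pos hMbpos (hrpos i0)] : (0:ℝ) ≤ T + Mb * r i0) d)) h2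
  -- conclude
  have hb1pos : 0 < (T + Mb * r i0) ^ d / (r i0 / 2) ^ d := by
    have := hrpos i0
    apply div_pos (pow_pos (by nlinarith [hMbpos]) d) (pow_pos (by linarith) d)
  have hb2pos : 0 < (T - Mb * R i0) ^ d / (R i0) ^ d :=
    div_pos (pow_pos hTMR d) (pow_pos (hRpos i0) d)
  have h1 : lam ≤ δ := by
    apply PfAux.le_of_pow_bounded hlam hδpos (mul_pos (mul_pos hαpos (hv i0)) one_pos) hb1pos
    intro n
    obtain ⟨hlow, -, -, hvolup⟩ := main n
    have hw : (0:ℝ) < (r i0 / 2) ^ d := pow_pos (by nlinarith [hrpos i0]) d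
    rw [← mul_le_mul_iff_of_pos_right hw]
    calc α * v i0 * 1 * lam ^ n * (r i0 / 2) ^ d
        ≤ ((Λ i0 ∩ (⇑(Q ^ n) '' Metric.closedBall 0 T)).ncard : ℝ) * (r i0 / 2) ^ d := by
          rw [mul_one]
          exact mul_le_mul_of_nonneg_right hlow hw.le
      _ ≤ δ ^ n * (T + Mb * r i0) ^ d := hvolup
      _ = (T + Mb * r i0) ^ d / (r i0 / 2) ^ d * δ ^ n * (r i0 / 2) ^ d := by
          rw [div_mul_eq_mul_div, div_mul_cancel₀ _ hw.ne']
          ring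
  have h2 : δ ≤ lam := by
    apply PfAux.le_of_pow_bounded hδpos hlam hb2pos (mul_pos (mul_pos hβpos (hv i0)) one_pos)
    intro n
    obtain ⟨-, hup, hvollow, -⟩ := main n
    have hw : (0:ℝ) < (R i0) ^ d := pow_pos (hRpos i0) d
    rw [← mul_le_mul_iff_of_pos_right hw]
    calc (T - Mb * R i0) ^ d / (R i0) ^ d * δ ^ n * (R i0) ^ d
        = δ ^ n * (T - Mb * R i0) ^ d := by
          rw [div_mul_eq_mul_div, div_mul_cancel₀ _ hw.ne']
          ring
      _ ≤ ((Λ i0 ∩ (⇑(Q ^ n) '' Metric.closedBall 0 T)).ncard : ℝ) * (R i0) ^ d := hvollow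
      _ ≤ β * v i0 * 1 * lam ^ n * (R i0) ^ d := by
          rw [mul_one]
          exact mul_le_mul_of_nonneg_right hup hw.le
  linarith
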